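/- arXiv:2506.02725 — 3 statements merged into one kernel-verified Lean document; each statement's English description precedes it below -/
import Mathlib

section
/- Let d ≥ 1 and let a > 1 and s ≠ 0 be real numbers, and fix k₀ ∈ ℕ. On a probability space, let (b̄ₖ)ₖ and (eₖ)ₖ be sequences of Bochner-integrable random vectors in ℝ^d such that for every k ≥ k₀ + 2 the pathwise recursion b̄ₖ = a • (b̄ₖ₋₁ − s • eₖ₋₁) + s • eₖ holds, 𝔼[eₖ] = 0 for every k, and 𝔼[b̄ₖ₀₊₁] ≠ 0. Then ‖𝔼[b̄ₖ]‖ → ∞ as k → ∞. (Proposition 1: divergence of the eavesdropper's decoding error after a critical event.) -/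
open MeasureTheory Filter

/-- Proposition 1: divergence of the eavesdropper's decoding error after a critical event. -/
theorem eavesdropper_decoding_error_diverges
    {d : ℕ} (hd : 1 ≤ d)
    {Ω : Type*} [MeasurableSpace Ω] (μ : Measure Ω) [IsProbabilityMeasure μ]
    (a s : ℝ) (ha : 1 < a) (hs : s ≠ 0) (k₀ : ℕ)
    (bbar e : ℕ → Ω → EuclideanSpace ℝ (Fin d))
    (hbbar_int : ∀ k, Integrable (bbar k) μ)
    (he_int : ∀ k, Integrable (e k) μ)
    (hrec : ∀ k, k₀ + 1 ≤ k → ∀ ω,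
      bbar (k + 1) ω = a • (bbar k ω - s • e k ω) + s • e (k + 1) ω)
    (he_mean : ∀ k, ∫ ω, e k ω ∂μ = 0)
    (hb_ne : ∫ ω, bbar (k₀ + 1) ω ∂μ ≠ 0) :
    Tendsto (fun k => ‖∫ ω, bbar k ω ∂μ‖) atTop atTop := by
  set m : ℕ → EuclideanSpace ℝ (Fin d) := fun k => ∫ ω, bbar k ω ∂μ with hm
  have hstep : ∀ k, k₀ + 1 ≤ k → m (k + 1) = a • m k := by
    intro k hk
    have : m (k + 1) = ∫ ω, (a • (bbar k ω - s • e k ω) + s • e (k + 1) ω) ∂μ := by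
      simp only [hm]
      exact integral_congr_ae (Filter.Eventually.of_forall (hrec k hk))
    have h1 : Integrable (fun ω => a • (bbar k ω - s • e k ω)) μ :=
      (((hbbar_int k).sub ((he_int k).smul s))).smul a
    have h2 : Integrable (fun ω => s • e (k + 1) ω) μ := (he_int (k+1)).smul s
    have h4 : Integrable (fun ω => s • e k ω) μ := (he_int k).smul s
    rw [this, integral_add h1 h2, integral_smul, integral_smul,
        integral_sub (hbbar_int k) h4, integral_smul, he_mean, he_mean]
    simp [hm]
  have hpow : ∀ n, m (k₀ + 1 + n) = a ^ n • m (k₀ + 1) := by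
    intro n
    induction n with
    | zero => simp
    | succ n ih =>
      rw [show k₀ + 1 + (n + 1) = (k₀ + 1 + n) + 1 by ring,
        hstep _ (Nat.le_add_right _ _), ih, smul_smul, pow_succ]
      ring_nf
  have hC : 0 < ‖m (k₀ + 1)‖ := norm_pos_iff.mpr hb_ne
  have htend : Tendsto (fun n : ℕ => a ^ n * ‖m (k₀ + 1)‖) atTop atTop :=
    (tendsto_pow_atTop_atTop_of_one_lt ha).atTop_mul_const hC
  have hsub : Tendsto (fun k : ℕ => k - (k₀ + 1)) atTop atTop :=
    tendsto_sub_atTop_nat (k₀ + 1)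
  have := htend.comp hsub
  refine Tendsto.congr' ?_ this
  filter_upwards [eventually_ge_atTop (k₀ + 1)] with k hk
  have hk' : k₀ + 1 + (k - (k₀ + 1)) = k := by omega
  simp only [Function.comp]
  have h3 := hpow (k - (k₀ + 1))
  rw [hk'] at h3
  show a ^ (k - (k₀ + 1)) * ‖m (k₀ + 1)‖ = ‖m k‖
  rw [h3, norm_smul]
  simp [abs_of_pos (by linarith : (0:ℝ) < a)]
end

section
/- Let P and Q be symmetric n×n real matrices and C an m×n real matrix, and let q > 0, c > 0, σ > 0 be reals. Assume Q ⪰ q·Iₙ, P ⪰ Q, C·Cᵀ ⪰ c·Iₘ, and that the symmetric m×m matrix S = C·P·Cᵀ + R (with R positive semidefinite) is positive definite and satisfies S ⪯ σ·Iₘ. Define the gain K = P·Cᵀ·S⁻¹. Then Kᵀ·K ⪰ (q²·c/σ²)·Iₘ; in particular there exists a positive scalar κ̄ = q²c/σ² with Kᵀ·K ⪰ κ̄·Iₘ. (Proposition 2: uniform lower bound on the estimator gain.) -/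
open Matrix

lemma dot_sq_nonneg {k : ℕ} (v : Fin k → ℝ) : 0 ≤ v ⬝ᵥ v :=
  Finset.sum_nonneg fun i _ => mul_self_nonneg _

lemma dot_cauchy {k : ℕ} (v w : Fin k → ℝ) :
    (v ⬝ᵥ w) ^ 2 ≤ (v ⬝ᵥ v) * (w ⬝ᵥ w) := by
  simpa [dotProduct, pow_two] using
    Finset.sum_mul_sq_le_sq_mul_sq Finset.univ v w

lemma psd_dot {k : ℕ} {A : Matrix (Fin k) (Fin k) ℝ} (hA : A.PosSemidef)
    (x : Fin k → ℝ) : 0 ≤ x ⬝ᵥ A *ᵥ x := by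
  simpa using hA.dotProduct_mulVec_nonneg x

lemma psd_cauchy {k : ℕ} {A : Matrix (Fin k) (Fin k) ℝ} (hA : A.PosSemidef)
    (x y : Fin k → ℝ) :
    (x ⬝ᵥ A *ᵥ y) ^ 2 ≤ (x ⬝ᵥ A *ᵥ x) * (y ⬝ᵥ A *ᵥ y) := by
  obtain ⟨T, hT⟩ : ∃ T : Matrix (Fin k) (Fin k) ℝ, A = star T * T := by
    open MatrixOrder in exact CStarAlgebra.nonneg_iff_eq_star_mul_self.mp hA.nonneg
  have key : ∀ a b : Fin k → ℝ, a ⬝ᵥ A *ᵥ b = (T *ᵥ a) ⬝ᵥ (T *ᵥ b) := by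
    intro a b
    rw [hT, star_eq_conjTranspose, conjTranspose_eq_transpose_of_trivial, ← mulVec_mulVec,
      dotProduct_mulVec, vecMul_transpose]
  rw [key, key, key]
  exact dot_cauchy _ _

set_option maxHeartbeats 1000000 in
/-- Proposition 2: uniform lower bound on the estimator gain. -/
theorem gain_lower_bound
    {n m : ℕ} (P Q : Matrix (Fin n) (Fin n) ℝ) (C : Matrix (Fin m) (Fin n) ℝ)
    (R : Matrix (Fin m) (Fin m) ℝ)
    (hP : P.IsSymm) (hQ : Q.IsSymm)
    (q c σ : ℝ) (hq : 0 < q) (hc : 0 < c) (hσ : 0 < σ)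
    (hQq : (Q - q • (1 : Matrix (Fin n) (Fin n) ℝ)).PosSemidef)
    (hPQ : (P - Q).PosSemidef)
    (hCC : (C * Cᵀ - c • (1 : Matrix (Fin m) (Fin m) ℝ)).PosSemidef)
    (hR : R.PosSemidef)
    (hSpd : (C * P * Cᵀ + R).PosDef)
    (hSσ : (σ • (1 : Matrix (Fin m) (Fin m) ℝ) - (C * P * Cᵀ + R)).PosSemidef) :
    ((P * Cᵀ * (C * P * Cᵀ + R)⁻¹)ᵀ * (P * Cᵀ * (C * P * Cᵀ + R)⁻¹) -
        (q ^ 2 * c / σ ^ 2) • (1 : Matrix (Fin m) (Fin m) ℝ)).PosSemidef ∧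
      ∃ κ : ℝ, 0 < κ ∧
        ((P * Cᵀ * (C * P * Cᵀ + R)⁻¹)ᵀ * (P * Cᵀ * (C * P * Cᵀ + R)⁻¹) -
          κ • (1 : Matrix (Fin m) (Fin m) ℝ)).PosSemidef := by
  set S : Matrix (Fin m) (Fin m) ℝ := C * P * Cᵀ + R with hS
  set K : Matrix (Fin n) (Fin m) ℝ := P * Cᵀ * S⁻¹ with hK
  have hSinv : S * S⁻¹ = 1 := mul_nonsing_inv _ ((Matrix.isUnit_iff_isUnit_det S).mp hSpd.isUnit)
  have main : (Kᵀ * K - (q ^ 2 * c / σ ^ 2) • (1 : Matrix (Fin m) (Fin m) ℝ)).PosSemidef := by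
    refine Matrix.PosSemidef.of_dotProduct_mulVec_nonneg ?_ ?_
    · show _ᴴ = _
      rw [conjTranspose_eq_transpose_of_trivial, transpose_sub, transpose_smul,
        transpose_one, transpose_mul, transpose_transpose]
    · intro x
      simp only [star_trivial, sub_mulVec, dotProduct_sub, smul_mulVec,
        one_mulVec, dotProduct_smul, smul_eq_mul, sub_nonneg]
      set w : Fin m → ℝ := S⁻¹ *ᵥ x with hw
      set z : Fin n → ℝ := Cᵀ *ᵥ w with hz
      set u : Fin n → ℝ := P *ᵥ z with hu
      have hKx : K *ᵥ x = u := by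
        rw [hK, ← mulVec_mulVec, ← hw, ← mulVec_mulVec, ← hz, ← hu]
      have hxSw : S *ᵥ w = x := by
        rw [hw, mulVec_mulVec, hSinv, one_mulVec]
      have hquad : x ⬝ᵥ (Kᵀ * K) *ᵥ x = u ⬝ᵥ u := by
        rw [← mulVec_mulVec, dotProduct_mulVec, vecMul_transpose, hKx]
      rw [hquad]
      set a := x ⬝ᵥ x with ha
      set b := w ⬝ᵥ w with hb
      set d := z ⬝ᵥ z with hd
      set e := u ⬝ᵥ u with he
      have ha0 : 0 ≤ a := dot_sq_nonneg x
      have hb0 : 0 ≤ b := dot_sq_nonneg w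
      have hd0 : 0 ≤ d := dot_sq_nonneg z
      have he0 : 0 ≤ e := dot_sq_nonneg u
      -- z ⬝ᵥ P z ≥ q d
      have hPz : q * d ≤ z ⬝ᵥ P *ᵥ z := by
        have h1 := psd_dot hPQ z
        have h2 := psd_dot hQq z
        simp only [sub_mulVec, dotProduct_sub, smul_mulVec, one_mulVec,
          dotProduct_smul, smul_eq_mul, sub_nonneg] at h1 h2
        linarith
      -- Cauchy-Schwarz: (z ⬝ᵥ u)^2 ≤ d * e
      have hCS1 : (z ⬝ᵥ P *ᵥ z) ^ 2 ≤ d * e := by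
        rw [hd, he, hu]
        exact dot_cauchy z (P *ᵥ z)
      -- d ≥ c b
      have hdb : c * b ≤ d := by
        have h3 := psd_dot hCC w
        simp only [sub_mulVec, dotProduct_sub, smul_mulVec, one_mulVec,
          dotProduct_smul, smul_eq_mul, sub_nonneg] at h3
        have hzz : w ⬝ᵥ (C * Cᵀ) *ᵥ w = d := by
          rw [← mulVec_mulVec, dotProduct_mulVec, ← transpose_transpose C,
            vecMul_transpose, transpose_transpose, hd, hz]
        linarith [hzz ▸ h3]
      -- a ≤ σ² b
      have hab : a ≤ σ ^ 2 * b := by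
        have hCS2 := psd_cauchy hSpd.posSemidef x w
        have hx1 : x ⬝ᵥ S *ᵥ w = a := by rw [hxSw, ha]
        have hσx : x ⬝ᵥ S *ᵥ x ≤ σ * a := by
          have := psd_dot hSσ x
          simp only [sub_mulVec, dotProduct_sub, smul_mulVec, one_mulVec,
            dotProduct_smul, smul_eq_mul, sub_nonneg] at this
          linarith
        have hσw : w ⬝ᵥ S *ᵥ w ≤ σ * b := by
          have := psd_dot hSσ w
          simp only [sub_mulVec, dotProduct_sub, smul_mulVec, one_mulVec,
            dotProduct_smul, smul_eq_mul, sub_nonneg] at this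
          linarith
        have hSx0 : 0 ≤ x ⬝ᵥ S *ᵥ x := psd_dot hSpd.posSemidef x
        have hSw0 : 0 ≤ w ⬝ᵥ S *ᵥ w := psd_dot hSpd.posSemidef w
        rw [hx1] at hCS2
        have hmm : x ⬝ᵥ S *ᵥ x * w ⬝ᵥ S *ᵥ w ≤ (σ * a) * (σ * b) :=
          mul_le_mul hσx hσw hSw0 (mul_nonneg hσ.le ha0)
        rcases eq_or_lt_of_le ha0 with h | h
        · rw [← h]; positivity
        · refine le_of_mul_le_mul_right ?_ h
          nlinarith [hCS2, hmm]
      -- e ≥ q² d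
      have hed : q ^ 2 * d ≤ e := by
        rcases eq_or_lt_of_le hd0 with h | h
        · nlinarith
        · have h4 : (q * d) ^ 2 ≤ (z ⬝ᵥ P *ᵥ z) ^ 2 := by
            have h5 : 0 ≤ q * d := by positivity
            nlinarith
          have h6 : q ^ 2 * d * d ≤ d * e := by nlinarith
          exact le_of_mul_le_mul_right (by nlinarith) h
      rw [div_mul_eq_mul_div, div_le_iff₀ (by positivity : (0:ℝ) < σ ^ 2)]
      have s1 : q ^ 2 * c * a ≤ q ^ 2 * c * (σ ^ 2 * b) :=
        mul_le_mul_of_nonneg_left hab (by positivity)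
      have s2 : σ ^ 2 * (q ^ 2 * (c * b)) ≤ σ ^ 2 * (q ^ 2 * d) := by
        have := mul_le_mul_of_nonneg_left hdb (le_of_lt (by positivity : (0:ℝ) < q ^ 2))
        exact mul_le_mul_of_nonneg_left this (by positivity)
      have s3 : σ ^ 2 * (q ^ 2 * d) ≤ σ ^ 2 * e :=
        mul_le_mul_of_nonneg_left hed (by positivity)
      nlinarith [s1, s2, s3]
  exact ⟨main, q ^ 2 * c / σ ^ 2, by positivity, main⟩
end

section
/- Let A be an n×n real matrix, κ̄ > 0 a real number, k₀ ∈ ℕ, and for every k ∈ ℕ let Kₖ be an n×m real matrix with Kₖᵀ·Kₖ ⪰ κ̄·Iₘ. Let (bₖ)ₖ in ℝⁿ and (cₖ)ₖ in ℝᵐ be sequences satisfying bₖ₊₁ = A·bₖ + Kₖ₊₁·cₖ₊₁ for all k ≥ k₀. If ‖cₖ‖ → ∞ as k → ∞, then the sequence (‖bₖ‖)ₖ is not eventually bounded; i.e., there is no constant χ̃ such that ‖bₖ‖ ≤ χ̃ for all sufficiently large k. (The deterministic core of Lemma 1: divergence of the eavesdropper's mean estimation error.) -/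
open Matrix Filter

lemma key_norm {n m : ℕ} (K : Matrix (Fin n) (Fin m) ℝ) (x : EuclideanSpace ℝ (Fin m)) :
    ‖K.toEuclideanLin x‖^2 = (x : Fin m → ℝ) ⬝ᵥ (Kᵀ * K).mulVec x := by
  rw [← real_inner_self_eq_norm_sq]
  simp only [toEuclideanLin_apply, EuclideanSpace.inner_eq_star_dotProduct]
  rw [← mulVec_mulVec, dotProduct_mulVec]
  simp only [vecMul_transpose]
  rfl

lemma key {n m : ℕ} (K : Matrix (Fin n) (Fin m) ℝ) (κ : ℝ)
    (hK : (Kᵀ * K - κ • (1 : Matrix (Fin m) (Fin m) ℝ)).PosSemidef)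
    (x : EuclideanSpace ℝ (Fin m)) :
    κ * ‖x‖^2 ≤ ‖K.toEuclideanLin x‖^2 := by
  have h := hK.dotProduct_mulVec_nonneg (x : Fin m → ℝ)
  simp only [sub_mulVec, smul_mulVec, one_mulVec, dotProduct_sub, dotProduct_smul,
    RCLike.re_to_real, star_trivial, smul_eq_mul] at h
  have hx : (x : Fin m → ℝ) ⬝ᵥ x = ‖x‖^2 := by
    rw [← real_inner_self_eq_norm_sq]; rfl
  rw [key_norm]
  rw [hx] at h; linarith

/-- The deterministic core of Lemma 1: divergence of the eavesdropper's mean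
estimation error. -/
theorem mean_estimation_error_not_eventually_bounded
    {n m : ℕ} (A : Matrix (Fin n) (Fin n) ℝ) (κ : ℝ) (hκ : 0 < κ) (k₀ : ℕ)
    (K : ℕ → Matrix (Fin n) (Fin m) ℝ)
    (hK : ∀ k, ((K k)ᵀ * K k - κ • (1 : Matrix (Fin m) (Fin m) ℝ)).PosSemidef)
    (b : ℕ → EuclideanSpace ℝ (Fin n)) (c : ℕ → EuclideanSpace ℝ (Fin m))
    (hrec : ∀ k, k₀ ≤ k →
      b (k + 1) = A.toEuclideanLin (b k) + (K (k + 1)).toEuclideanLin (c (k + 1)))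
    (hc : Tendsto (fun k => ‖c k‖) atTop atTop) :
    ¬ ∃ χ : ℝ, ∀ᶠ k in atTop, ‖b k‖ ≤ χ := by
  rintro ⟨χ, hχ⟩
  rw [eventually_atTop] at hχ
  obtain ⟨N, hN⟩ := hχ
  set CA : ℝ := ‖LinearMap.toContinuousLinearMap A.toEuclideanLin‖ with hCA
  have hCA0 : 0 ≤ CA := norm_nonneg _
  set B : ℝ := max χ 0 + CA * max χ 0 with hB
  have hB0 : 0 ≤ B := by positivity
  set D : ℝ := Real.sqrt (B ^ 2 / κ) with hD
  -- eventually ‖c k‖ ≥ D + 1, and k large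
  have h1 : ∀ᶠ k in atTop, D + 1 ≤ ‖c k‖ := hc.eventually_ge_atTop (D + 1)
  rw [eventually_atTop] at h1
  obtain ⟨N', hN'⟩ := h1
  set k := max (max N k₀) N' + 1 with hk
  have hkN : N ≤ k := le_trans (le_max_of_le_left (le_max_left _ _)) (Nat.le_succ _)
  have hkk₀ : k₀ ≤ max (max N k₀) N' := le_max_of_le_left (le_max_right _ _)
  have hkN' : N' ≤ k := le_trans (le_max_right _ _) (Nat.le_succ _)
  -- bound on ‖K k c k‖
  have hrec' := hrec (max (max N k₀) N') hkk₀
  have hKc : ‖(K k).toEuclideanLin (c k)‖ ≤ B := by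
    have : (K k).toEuclideanLin (c k)
        = b k - A.toEuclideanLin (b (max (max N k₀) N')) := by
      rw [hrec']; abel
    rw [this]
    refine le_trans (norm_sub_le _ _) ?_
    have h1 : ‖b k‖ ≤ max χ 0 := le_max_of_le_left (hN k hkN)
    have h2 : ‖A.toEuclideanLin (b (max (max N k₀) N'))‖
        ≤ CA * max χ 0 := by
      refine le_trans ((LinearMap.toContinuousLinearMap A.toEuclideanLin).le_opNorm _) ?_
      exact mul_le_mul_of_nonneg_left
        (le_max_of_le_left (hN _ (le_max_of_le_left (le_max_left _ _)))) (norm_nonneg _)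
    linarith
  -- lower bound
  have hkey := key (K k) κ (hK k) (c k)
  have hc2 : ‖c k‖ ^ 2 ≤ B ^ 2 / κ := by
    rw [le_div_iff₀ hκ]
    nlinarith [norm_nonneg ((K k).toEuclideanLin (c k)), hKc]
  have hle : ‖c k‖ ≤ D := by
    rw [hD]
    exact (Real.le_sqrt (norm_nonneg _) (by positivity)).mpr hc2
  have := hN' k hkN'
  linarith
end
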